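/- Let G be a (P2+P3, complement-of-(P2+P3))-free graph containing an induced 4-cycle C with vertices v1,v2,v3,v4 in cyclic order. Let D be the set of vertices complete to C, and for i in {1,2,3,4} let A_i, B_i, T be as usual (A_i: neighbors on C exactly {v_i}; B_i: exactly {v_i,v_{i+1}}; T: no neighbors on C). Then for any vertex p ∈ A_i ∪ B_i ∪ T, the set N(p) ∩ (D ∪ B_{i+2}) is a clique. -/

import Mathlib

open SimpleGraph

/-- `P2 + P3`: disjoint union of a 2-vertex path and a 3-vertex path. -/
def p2p3 : SimpleGraph (Fin 5) :=
  SimpleGraph.fromRel fun a b =>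
    (a = 0 ∧ b = 1) ∨ (a = 2 ∧ b = 3) ∨ (a = 3 ∧ b = 4)

/-- `G` contains no induced copy of `H`. -/
def InducedFree {α β : Type*} (H : SimpleGraph α) (G : SimpleGraph β) : Prop :=
  ¬ ∃ f : α ↪ β, ∀ a b, H.Adj a b ↔ G.Adj (f a) (f b)

/-- `s` is a stable (independent) set in `G`. -/
def StableSet {V : Type*} (G : SimpleGraph V) (s : Set V) : Prop :=
  s.Pairwise fun a b => ¬ G.Adj a b

/-- `v 0, v 1, v 2, v 3` are the vertices, in cyclic order, of an induced 4-cycle in `G`. -/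
def InducedC4 {V : Type*} (G : SimpleGraph V) (v : Fin 4 → V) : Prop :=
  Function.Injective v ∧ (∀ i : Fin 4, G.Adj (v i) (v (i + 1))) ∧
    ¬ G.Adj (v 0) (v 2) ∧ ¬ G.Adj (v 1) (v 3)

/-- `A_i`: vertices outside the cycle whose unique neighbour on the cycle is `v i`. -/
def vertA {V : Type*} (G : SimpleGraph V) (v : Fin 4 → V) (i : Fin 4) : Set V :=
  {x | x ∉ Set.range v ∧ ∀ j, G.Adj x (v j) ↔ j = i}

/-- `B_i`: vertices outside the cycle whose neighbours on the cycle are exactly `v i, v (i+1)`. -/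
def vertB {V : Type*} (G : SimpleGraph V) (v : Fin 4 → V) (i : Fin 4) : Set V :=
  {x | x ∉ Set.range v ∧ ∀ j, G.Adj x (v j) ↔ (j = i ∨ j = i + 1)}

/-- `X_j`: vertices outside the cycle whose neighbours on the cycle are exactly `v j, v (j+2)`. -/
def vertX {V : Type*} (G : SimpleGraph V) (v : Fin 4 → V) (j : Fin 4) : Set V :=
  {x | x ∉ Set.range v ∧ ∀ k, G.Adj x (v k) ↔ (k = j ∨ k = j + 2)}

/-- `T`: vertices outside the cycle with no neighbour on the cycle. -/
def vertT {V : Type*} (G : SimpleGraph V) (v : Fin 4 → V) : Set V :=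
  {x | x ∉ Set.range v ∧ ∀ j, ¬ G.Adj x (v j)}

/-- `D`: vertices complete to the cycle. -/
def vertD {V : Type*} (G : SimpleGraph V) (v : Fin 4 → V) : Set V :=
  {x | ∀ j, G.Adj x (v j)}

set_option maxHeartbeats 1000000 in
theorem stmt7 {V : Type*} (G : SimpleGraph V)
    (h1 : InducedFree p2p3 G) (h2 : InducedFree p2p3ᶜ G)
    (v : Fin 4 → V) (hC : InducedC4 G v) (i : Fin 4) :
    ∀ p ∈ vertA G v i ∪ vertB G v i ∪ vertT G v,
      G.IsClique (G.neighborSet p ∩ (vertD G v ∪ vertB G v (i + 2))) := by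
  intro p hp x hx y hy hxy
  by_contra hadj
  obtain ⟨hpx, hxD⟩ := hx
  obtain ⟨hpy, hyD⟩ := hy
  simp only [SimpleGraph.mem_neighborSet] at hpx hpy
  have h4 : ∀ j : Fin 4, j + 2 ≠ j ∧ j + 2 ≠ j + 1 ∧ j + 2 + 1 ≠ j ∧ j + 2 + 1 ≠ j + 1 := by
    decide
  have hpfacts : p ∉ Set.range v ∧ ¬ G.Adj p (v (i+2)) ∧ ¬ G.Adj p (v (i+2+1)) := by
    rcases hp with (hp | hp) | hp
    · exact ⟨hp.1, fun h => (h4 i).1 ((hp.2 _).1 h),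
        fun h => (h4 i).2.2.1 ((hp.2 _).1 h)⟩
    · refine ⟨hp.1, fun h => ?_, fun h => ?_⟩
      · rcases (hp.2 _).1 h with h' | h'
        · exact (h4 i).1 h'
        · exact (h4 i).2.1 h'
      · rcases (hp.2 _).1 h with h' | h'
        · exact (h4 i).2.2.1 h'
        · exact (h4 i).2.2.2 h'
    · exact ⟨hp.1, hp.2 _, hp.2 _⟩
  obtain ⟨hpr, hpv2, hpv3⟩ := hpfacts
  have hxadj : ∀ z, z ∈ vertD G v ∪ vertB G v (i+2) →
      G.Adj z (v (i+2)) ∧ G.Adj z (v (i+2+1)) := by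
    rintro z (hz | hz)
    · exact ⟨hz _, hz _⟩
    · exact ⟨(hz.2 _).2 (Or.inl rfl), (hz.2 _).2 (Or.inr rfl)⟩
  obtain ⟨hxv2, hxv3⟩ := hxadj x hxD
  obtain ⟨hyv2, hyv3⟩ := hxadj y hyD
  have hv23 : G.Adj (v (i+2)) (v (i+2+1)) := hC.2.1 (i+2)
  have hpne2 : p ≠ v (i+2) := fun h => hpr ⟨i+2, h.symm⟩
  have hpne3 : p ≠ v (i+2+1) := fun h => hpr ⟨i+2+1, h.symm⟩
  apply h2
  refine ⟨⟨![x, y, v (i+2), p, v (i+2+1)], ?_⟩, ?_⟩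
  · intro a b hab
    fin_cases a <;> fin_cases b <;>
      simp_all [hxy, hxv2.ne, hxv3.ne, hpx.ne', hpy.ne', hyv2.ne, hyv3.ne, hv23.ne,
        hpne2, hpne3] <;>
      first
        | rfl
        | (exact absurd hab.symm (by assumption))
        | (exact absurd hab (by assumption))
  · intro a b
    have hyx : ¬ G.Adj y x := fun h => hadj h.symm
    fin_cases a <;> fin_cases b <;>
      simp_all [p2p3, SimpleGraph.fromRel_adj, hpx.symm, hpy.symm, hxv2.symm, hxv3.symm,
        hyv2.symm, hyv3.symm, hv23.symm, G.irrefl] <;>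
      first
        | (exact fun h => hadj h)
        | (exact fun h => hpv2 h.symm)
        | (exact fun h => hpv3 h.symm)
        | (exact fun h => hadj h.symm)
        | tauto
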